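/- Let G ⊆ ℂ×ℂ be open and let φ₁, φ₂ : ℂ×ℂ → ℂ be ℂ-differentiable on G and satisfy the bicomplex Cauchy–Riemann equations ∂φ₁/∂a = ∂φ₂/∂b and ∂φ₂/∂a = −∂φ₁/∂b throughout G. Then ψ = (φ₁,φ₂) is bicomplex-differentiable at every p ∈ G: the bicomplex difference quotient (ψ(p+Δp) − ψ(p)) ⊙ (Δp)⁻¹ tends to (∂φ₁/∂a (p), ∂φ₂/∂a (p)) as Δp → 0 restricted to nonsingular increments Δp. -/

import Mathlib

/-- Bicomplex multiplication on ℂ × ℂ. -/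
def bmul (p q : ℂ × ℂ) : ℂ × ℂ := (p.1 * q.1 - p.2 * q.2, p.2 * q.1 + p.1 * q.2)

/-- Bicomplex inverse (defined for nonsingular numbers). -/
noncomputable def binv (p : ℂ × ℂ) : ℂ × ℂ :=
  (p.1 / (p.1 ^ 2 + p.2 ^ 2), -p.2 / (p.1 ^ 2 + p.2 ^ 2))

/-- The set of nonsingular bicomplex numbers. -/
def nonsingularSet : Set (ℂ × ℂ) := {q | q.1 ^ 2 + q.2 ^ 2 ≠ 0}

open Complex Filter Metric

lemma clm_apply_pair (L : (ℂ × ℂ) →L[ℂ] ℂ) (u v : ℂ) :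
    L (u, v) = u * L (1, 0) + v * L (0, 1) := by
  have h : (u, v) = u • ((1 : ℂ), (0 : ℂ)) + v • ((0 : ℂ), (1 : ℂ)) := by
    simp [Prod.ext_iff]
  rw [h, map_add, map_smul, map_smul, smul_eq_mul, smul_eq_mul]

theorem CR_implies_bicomplex_differentiable (G : Set (ℂ × ℂ)) (hG : IsOpen G)
    (φ₁ φ₂ : ℂ × ℂ → ℂ)
    (hd₁ : ∀ p ∈ G, DifferentiableAt ℂ φ₁ p)
    (hd₂ : ∀ p ∈ G, DifferentiableAt ℂ φ₂ p)
    (hcr₁ : ∀ p ∈ G, fderiv ℂ φ₁ p (1, 0) = fderiv ℂ φ₂ p (0, 1))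
    (hcr₂ : ∀ p ∈ G, fderiv ℂ φ₂ p (1, 0) = -fderiv ℂ φ₁ p (0, 1)) :
    ∀ p ∈ G, Filter.Tendsto
      (fun Δp : ℂ × ℂ =>
        bmul ((φ₁ (p + Δp), φ₂ (p + Δp)) - (φ₁ p, φ₂ p)) (binv Δp))
      (nhdsWithin 0 nonsingularSet)
      (nhds (fderiv ℂ φ₁ p (1, 0), fderiv ℂ φ₂ p (1, 0))) := by
  intro p hp
  set c := fderiv ℂ φ₁ p (1, 0) with hc
  set d := fderiv ℂ φ₂ p (1, 0) with hd
  -- the two "idempotent component" functions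
  set g₁ : ℂ × ℂ → ℂ := fun x => φ₁ x + Complex.I * φ₂ x with hg₁def
  set g₂ : ℂ × ℂ → ℂ := fun x => φ₁ x - Complex.I * φ₂ x with hg₂def
  set v₁ : ℂ × ℂ := ((1 : ℂ) / 2, -Complex.I / 2) with hv₁def
  set v₀ : ℂ × ℂ := ((1 : ℂ) / 2, Complex.I / 2) with hv₀def
  have hdg₁ : ∀ q ∈ G, DifferentiableAt ℂ g₁ q := fun q hq =>
    (hd₁ q hq).add ((hd₂ q hq).const_mul _)
  have hdg₂ : ∀ q ∈ G, DifferentiableAt ℂ g₂ q := fun q hq =>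
    (hd₁ q hq).sub ((hd₂ q hq).const_mul _)
  have hfg₁ : ∀ q ∈ G, ∀ w, fderiv ℂ g₁ q w
      = fderiv ℂ φ₁ q w + Complex.I * fderiv ℂ φ₂ q w := by
    intro q hq w
    have h1 : fderiv ℂ g₁ q = fderiv ℂ φ₁ q + Complex.I • fderiv ℂ φ₂ q := by
      rw [hg₁def]
      rw [fderiv_fun_add (hd₁ q hq) ((hd₂ q hq).const_mul _), fderiv_const_mul (hd₂ q hq)]
    rw [h1]; simp
  have hfg₂ : ∀ q ∈ G, ∀ w, fderiv ℂ g₂ q w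
      = fderiv ℂ φ₁ q w - Complex.I * fderiv ℂ φ₂ q w := by
    intro q hq w
    have h1 : fderiv ℂ g₂ q = fderiv ℂ φ₁ q - Complex.I • fderiv ℂ φ₂ q := by
      rw [hg₂def]
      rw [fderiv_fun_sub (hd₁ q hq) ((hd₂ q hq).const_mul _), fderiv_const_mul (hd₂ q hq)]
    rw [h1]; simp
  -- vanishing directional derivatives
  have hzero₁ : ∀ q ∈ G, fderiv ℂ g₁ q v₀ = 0 := by
    intro q hq
    rw [hfg₁ q hq, hv₀def, clm_apply_pair (fderiv ℂ φ₁ q),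
      clm_apply_pair (fderiv ℂ φ₂ q), hcr₁ q hq, hcr₂ q hq]
    ring_nf
    rw [Complex.I_sq]
    ring
  have hzero₂ : ∀ q ∈ G, fderiv ℂ g₂ q v₁ = 0 := by
    intro q hq
    rw [hfg₂ q hq, hv₁def, clm_apply_pair (fderiv ℂ φ₁ q),
      clm_apply_pair (fderiv ℂ φ₂ q), hcr₁ q hq, hcr₂ q hq]
    ring_nf
    rw [Complex.I_sq]
    ring
  -- derivative values at p
  have hcX : c = fderiv ℂ φ₂ p (0, 1) := by rw [hc, hcr₁ p hp]
  have hdY : d = -fderiv ℂ φ₁ p (0, 1) := by rw [hd, hcr₂ p hp]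
  have hval₁ : fderiv ℂ g₁ p v₁ = c + Complex.I * d := by
    rw [hfg₁ p hp, hv₁def, clm_apply_pair (fderiv ℂ φ₁ p),
      clm_apply_pair (fderiv ℂ φ₂ p), hcr₁ p hp, hcr₂ p hp, hcX, hdY]
    ring_nf
    rw [Complex.I_sq]
    ring
  have hval₂ : fderiv ℂ g₂ p v₀ = c - Complex.I * d := by
    rw [hfg₂ p hp, hv₀def, clm_apply_pair (fderiv ℂ φ₁ p),
      clm_apply_pair (fderiv ℂ φ₂ p), hcr₁ p hp, hcr₂ p hp, hcX, hdY]
    ring_nf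
    rw [Complex.I_sq]
    ring
  -- choose a ball around p inside G
  obtain ⟨ε, hε, hball⟩ := Metric.isOpen_iff.mp hG p hp
  -- norms of the basis vectors
  have hnv₁ : ‖v₁‖ ≤ 1 / 2 := by
    rw [hv₁def, Prod.norm_def]
    simp [map_div₀]
  have hnv₀ : ‖v₀‖ ≤ 1 / 2 := by
    rw [hv₀def, Prod.norm_def]
    simp [map_div₀]
  have hsr : (1 : ℂ →L[ℂ] ℂ).smulRight (0 : ℂ) = 0 := by ext; simp
  -- key constancy lemma
  have key : ∀ (g : ℂ × ℂ → ℂ) (va vb : ℂ × ℂ), ‖va‖ ≤ 1 / 2 → ‖vb‖ ≤ 1 / 2 →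
      (∀ q ∈ G, DifferentiableAt ℂ g q) → (∀ q ∈ G, fderiv ℂ g q vb = 0) →
      ∀ z₁ z₂ : ℂ, ‖z₁‖ < ε / 2 → ‖z₂‖ < ε / 2 →
      g (p + (z₁ • va + z₂ • vb)) = g (p + z₁ • va) := by
    intro g va vb hva hvb hdg hzg z₁ z₂ h1 h2
    set base := p + z₁ • va with hbase
    have hmem : ∀ t : ℂ, t ∈ Metric.ball (0 : ℂ) ε → base + t • vb ∈ G := by
      intro t ht
      apply hball
      rw [Metric.mem_ball, dist_eq_norm]
      have : base + t • vb - p = z₁ • va + t • vb := by rw [hbase]; abel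
      rw [this]
      calc ‖z₁ • va + t • vb‖ ≤ ‖z₁ • va‖ + ‖t • vb‖ := norm_add_le _ _
        _ ≤ ‖z₁‖ * (1 / 2) + ‖t‖ * (1 / 2) := by
            rw [norm_smul, norm_smul]
            gcongr
        _ < (ε / 2) * (1 / 2) + ε * (1 / 2) := by
            rw [Metric.mem_ball, dist_zero_right] at ht
            gcongr
        _ ≤ ε := by linarith
    have haff : ∀ t : ℂ, HasDerivAt (fun s : ℂ => base + s • vb) vb t := by
      intro t
      simpa using ((hasDerivAt_id t).smul_const vb).const_add base
    have hk : ∀ t ∈ Metric.ball (0 : ℂ) ε,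
        HasDerivAt (fun s : ℂ => g (base + s • vb)) 0 t := by
      intro t ht
      have h := ((hdg _ (hmem t ht)).hasFDerivAt).comp_hasDerivAt t (haff t)
      rwa [hzg _ (hmem t ht)] at h
    have hdiffOn : DifferentiableOn ℂ (fun s : ℂ => g (base + s • vb)) (Metric.ball 0 ε) :=
      fun t ht => ((hk t ht).differentiableAt).differentiableWithinAt
    have hfd' : ∀ t ∈ Metric.ball (0 : ℂ) ε,
        fderivWithin ℂ (fun s : ℂ => g (base + s • vb)) (Metric.ball 0 ε) t = 0 := by
      intro t ht
      rw [fderivWithin_of_isOpen Metric.isOpen_ball ht, ((hk t ht).hasFDerivAt).fderiv, ContinuousLinearMap.toSpanSingleton_zero]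
    have hconst : g (base + z₂ • vb) = g (base + (0 : ℂ) • vb) :=
      (convex_ball (0 : ℂ) ε).is_const_of_fderivWithin_eq_zero (𝕜 := ℂ) hdiffOn hfd'
        (by rw [Metric.mem_ball, dist_zero_right]; linarith)
        (by rw [Metric.mem_ball, dist_zero_right]; simpa using hε)
    have hz : g (base + z₂ • vb) = g base := by rw [hconst, zero_smul, add_zero]
    rw [← hz, hbase]
    congr 1
    rw [add_assoc]
  -- one-variable slope limits
  have hder₁ : HasDerivAt (fun z : ℂ => g₁ (p + z • v₁)) (c + Complex.I * d) 0 := by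
    have haff : HasDerivAt (fun z : ℂ => p + z • v₁) v₁ 0 := by
      simpa using ((hasDerivAt_id (0 : ℂ)).smul_const v₁).const_add p
    have hl : HasFDerivAt g₁ (fderiv ℂ g₁ p) (p + (0 : ℂ) • v₁) := by
      simpa using (hdg₁ p hp).hasFDerivAt
    have h := hl.comp_hasDerivAt (0 : ℂ) haff
    rwa [hval₁] at h
  have hder₂ : HasDerivAt (fun z : ℂ => g₂ (p + z • v₀)) (c - Complex.I * d) 0 := by
    have haff : HasDerivAt (fun z : ℂ => p + z • v₀) v₀ 0 := by
      simpa using ((hasDerivAt_id (0 : ℂ)).smul_const v₀).const_add p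
    have hl : HasFDerivAt g₂ (fderiv ℂ g₂ p) (p + (0 : ℂ) • v₀) := by
      simpa using (hdg₂ p hp).hasFDerivAt
    have h := hl.comp_hasDerivAt (0 : ℂ) haff
    rwa [hval₂] at h
  set h₁ : ℂ → ℂ := fun z => g₁ (p + z • v₁) with hh₁
  set h₂ : ℂ → ℂ := fun z => g₂ (p + z • v₀) with hh₂
  have hs₁ : Filter.Tendsto (slope h₁ 0) (nhdsWithin 0 {(0 : ℂ)}ᶜ) (nhds (c + Complex.I * d)) :=
    hasDerivAt_iff_tendsto_slope.mp hder₁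
  have hs₂ : Filter.Tendsto (slope h₂ 0) (nhdsWithin 0 {(0 : ℂ)}ᶜ) (nhds (c - Complex.I * d)) :=
    hasDerivAt_iff_tendsto_slope.mp hder₂
  -- factorization of the nonsingularity quadratic form
  have hfact : ∀ Δ : ℂ × ℂ, Δ.1 ^ 2 + Δ.2 ^ 2
      = (Δ.1 + Complex.I * Δ.2) * (Δ.1 - Complex.I * Δ.2) := by
    intro Δ
    linear_combination Δ.2 ^ 2 * Complex.I_sq
  have hne : ∀ Δ : ℂ × ℂ, Δ ∈ nonsingularSet →
      Δ.1 + Complex.I * Δ.2 ≠ 0 ∧ Δ.1 - Complex.I * Δ.2 ≠ 0 := by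
    intro Δ hΔ
    have h := hΔ
    simp only [nonsingularSet, Set.mem_setOf_eq, hfact Δ] at h
    exact ⟨fun h1 => h (by rw [h1, zero_mul]), fun h2 => h (by rw [h2, mul_zero])⟩
  -- the coordinate maps land in the punctured neighborhood
  have hχ₁ : Filter.Tendsto (fun Δ : ℂ × ℂ => Δ.1 + Complex.I * Δ.2)
      (nhdsWithin 0 nonsingularSet) (nhdsWithin 0 {(0 : ℂ)}ᶜ) := by
    rw [tendsto_nhdsWithin_iff]
    refine ⟨?_, ?_⟩
    · have hcont : Continuous (fun Δ : ℂ × ℂ => Δ.1 + Complex.I * Δ.2) :=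
        continuous_fst.add (continuous_const.mul continuous_snd)
      have := hcont.tendsto 0
      simp only [Prod.fst_zero, Prod.snd_zero, mul_zero, add_zero] at this
      exact this.mono_left nhdsWithin_le_nhds
    · filter_upwards [eventually_mem_nhdsWithin] with Δ hΔ
      simpa using (hne Δ hΔ).1
  have hχ₂ : Filter.Tendsto (fun Δ : ℂ × ℂ => Δ.1 - Complex.I * Δ.2)
      (nhdsWithin 0 nonsingularSet) (nhdsWithin 0 {(0 : ℂ)}ᶜ) := by
    rw [tendsto_nhdsWithin_iff]
    refine ⟨?_, ?_⟩
    · have hcont : Continuous (fun Δ : ℂ × ℂ => Δ.1 - Complex.I * Δ.2) :=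
        continuous_fst.sub (continuous_const.mul continuous_snd)
      have := hcont.tendsto 0
      simp only [Prod.fst_zero, Prod.snd_zero, mul_zero, sub_zero] at this
      exact this.mono_left nhdsWithin_le_nhds
    · filter_upwards [eventually_mem_nhdsWithin] with Δ hΔ
      simpa using (hne Δ hΔ).2
  -- combined limits of slopes composed with coordinates
  have T₁ : Filter.Tendsto (fun Δ : ℂ × ℂ => slope h₁ 0 (Δ.1 + Complex.I * Δ.2))
      (nhdsWithin 0 nonsingularSet) (nhds (c + Complex.I * d)) := hs₁.comp hχ₁
  have T₂ : Filter.Tendsto (fun Δ : ℂ × ℂ => slope h₂ 0 (Δ.1 - Complex.I * Δ.2))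
      (nhdsWithin 0 nonsingularSet) (nhds (c - Complex.I * d)) := hs₂.comp hχ₂
  have TA : Filter.Tendsto (fun Δ : ℂ × ℂ =>
      (slope h₁ 0 (Δ.1 + Complex.I * Δ.2) + slope h₂ 0 (Δ.1 - Complex.I * Δ.2)) / 2)
      (nhdsWithin 0 nonsingularSet) (nhds c) := by
    have h := (T₁.add T₂).div_const (2 : ℂ)
    have he : (c + Complex.I * d + (c - Complex.I * d)) / 2 = c := by ring
    rwa [he] at h
  have TB : Filter.Tendsto (fun Δ : ℂ × ℂ =>
      (slope h₁ 0 (Δ.1 + Complex.I * Δ.2) - slope h₂ 0 (Δ.1 - Complex.I * Δ.2)) / (2 * Complex.I))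
      (nhdsWithin 0 nonsingularSet) (nhds d) := by
    have h := (T₁.sub T₂).div_const (2 * Complex.I)
    have he : (c + Complex.I * d - (c - Complex.I * d)) / (2 * Complex.I) = d := by
      field_simp
      ring
    rwa [he] at h
  -- eventual equality of the bicomplex difference quotient with the slope expression
  have hev : ∀ᶠ Δ in nhdsWithin (0 : ℂ × ℂ) nonsingularSet,
      bmul ((φ₁ (p + Δ), φ₂ (p + Δ)) - (φ₁ p, φ₂ p)) (binv Δ)
        = ((slope h₁ 0 (Δ.1 + Complex.I * Δ.2) + slope h₂ 0 (Δ.1 - Complex.I * Δ.2)) / 2,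
           (slope h₁ 0 (Δ.1 + Complex.I * Δ.2) - slope h₂ 0 (Δ.1 - Complex.I * Δ.2))
             / (2 * Complex.I)) := by
    have hsmall : ∀ᶠ Δ : ℂ × ℂ in nhdsWithin 0 nonsingularSet, ‖Δ‖ < ε / 8 := by
      have : ∀ᶠ Δ : ℂ × ℂ in nhds 0, ‖Δ‖ < ε / 8 := by
        have := Metric.ball_mem_nhds (0 : ℂ × ℂ) (by linarith : (0:ℝ) < ε / 8)
        filter_upwards [this] with Δ hΔ
        rwa [Metric.mem_ball, dist_zero_right] at hΔ
      exact this.filter_mono nhdsWithin_le_nhds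
    filter_upwards [hsmall, eventually_mem_nhdsWithin] with Δ hΔs hΔns
    set z₁ : ℂ := Δ.1 + Complex.I * Δ.2 with hz₁def
    set z₂ : ℂ := Δ.1 - Complex.I * Δ.2 with hz₂def
    obtain ⟨hz₁, hz₂⟩ := hne Δ hΔns
    rw [← hz₁def] at hz₁
    rw [← hz₂def] at hz₂
    have habs₁ : ‖z₁‖ < ε / 2 := by
      calc ‖z₁‖ ≤ ‖Δ.1‖ + ‖Complex.I * Δ.2‖ := norm_add_le _ _
        _ ≤ ‖Δ‖ + ‖Δ‖ := by
            rw [norm_mul, Complex.norm_I, one_mul]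
            gcongr <;> [exact norm_fst_le Δ; exact norm_snd_le Δ]
        _ < ε / 2 := by linarith
    have habs₂ : ‖z₂‖ < ε / 2 := by
      calc ‖z₂‖ ≤ ‖Δ.1‖ + ‖Complex.I * Δ.2‖ := norm_sub_le _ _
        _ ≤ ‖Δ‖ + ‖Δ‖ := by
            rw [norm_mul, Complex.norm_I, one_mul]
            gcongr <;> [exact norm_fst_le Δ; exact norm_snd_le Δ]
        _ < ε / 2 := by linarith
    -- the decomposition of Δ in the idempotent basis
    have hdec₁ : Δ = z₁ • v₁ + z₂ • v₀ := by
      rw [hv₁def, hv₀def, Prod.ext_iff]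
      constructor
      · simp only [Prod.fst_add, Prod.smul_fst, smul_eq_mul]
        rw [hz₁def, hz₂def]; ring
      · simp only [Prod.snd_add, Prod.smul_snd, smul_eq_mul]
        rw [hz₁def, hz₂def]
        linear_combination Δ.2 * Complex.I_sq
    have hdec₂ : Δ = z₂ • v₀ + z₁ • v₁ := by rw [hdec₁]; abel
    -- constancy in the complementary directions
    have hg₁c : g₁ (p + Δ) = h₁ z₁ := by
      rw [hh₁]
      rw [show p + Δ = p + (z₁ • v₁ + z₂ • v₀) by rw [← hdec₁]]
      exact key g₁ v₁ v₀ hnv₁ hnv₀ hdg₁ hzero₁ z₁ z₂ habs₁ habs₂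
    have hg₂c : g₂ (p + Δ) = h₂ z₂ := by
      rw [hh₂]
      rw [show p + Δ = p + (z₂ • v₀ + z₁ • v₁) by rw [← hdec₂]]
      exact key g₂ v₀ v₁ hnv₀ hnv₁ hdg₂ hzero₂ z₂ z₁ habs₂ habs₁
    have hh₁0 : h₁ 0 = g₁ p := by rw [hh₁]; simp
    have hh₂0 : h₂ 0 = g₂ p := by rw [hh₂]; simp
    have hsl₁ : slope h₁ 0 z₁ = (g₁ (p + Δ) - g₁ p) / z₁ := by
      rw [slope_def_field, hg₁c, hh₁0, sub_zero]
    have hsl₂ : slope h₂ 0 z₂ = (g₂ (p + Δ) - g₂ p) / z₂ := by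
      rw [slope_def_field, hg₂c, hh₂0, sub_zero]
    rw [hsl₁, hsl₂]
    have hS : Δ.1 ^ 2 + Δ.2 ^ 2 = z₁ * z₂ := by rw [hz₁def, hz₂def]; exact hfact Δ
    simp only [bmul, binv, hg₁def, hg₂def, Prod.fst_sub, Prod.snd_sub, Prod.ext_iff, hS]
    have hI2 : Complex.I ^ 2 = -1 := Complex.I_sq
    have hI3 : Complex.I ^ 3 = -Complex.I := by
      rw [pow_succ, Complex.I_sq]; ring
    have hI4 : Complex.I ^ 4 = 1 := Complex.I_pow_four
    constructor
    · field_simp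
      ring_nf
      try simp only [hI2, hI3, hI4]
      rw [hz₁def, hz₂def]
      linear_combination (2 * Δ.2 * (φ₂ (p + Δ) - φ₂ p)) * hI2
    · field_simp [Complex.I_ne_zero]
      ring_nf
      try simp only [hI2, hI3, hI4]
      rw [hz₁def, hz₂def]
      ring
  -- conclude
  have := (TA.prodMk_nhds TB).congr' (hev.mono fun Δ h => h.symm)
  exact this
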